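/- In the setting of the FALM-S convergence analysis (f convex differentiable with L(f)-Lipschitz gradient, g convex, μ ≤ 1/L(f)), define u^k := t_k y^k − (t_k − 1)y^{k−1} − x* and v_k := 2(F(y^k) − F(x*)) if iteration k is a regular step, v_k := F(y^k) − F(x*) if iteration k is a skipping step. Then the iterates of FALM-S satisfy 2μ(t_k² v_k − t_{k+1}² v_{k+1}) ≥ ‖u^{k+1}‖² − ‖u^k‖² for all k ≥ 1, i.e., the sequence 2μ t_k² v_k + ‖u^k‖² is non-increasing. -/

import Mathlib

open scoped RealInnerProductSpace

section aux
variable {E : Type*} [NormedAddCommGroup E] [InnerProductSpace ℝ E] [CompleteSpace E]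

lemma line_hasDerivAt (f : E → ℝ) (f' : E → E) (hf' : ∀ p, HasGradientAt f (f' p) p)
    (a d : E) (s : ℝ) :
    HasDerivAt (fun r : ℝ => f (a + r • d)) ⟪f' (a + s • d), d⟫ s := by
  have h1 : HasDerivAt (fun r : ℝ => a + r • d) d s := by
    simpa using ((hasDerivAt_id s).smul_const d).const_add a
  have h2 := (hf' (a + s • d)).hasFDerivAt
  have h3 := h2.comp_hasDerivAt s h1
  simp only [InnerProductSpace.toDual_apply_apply] at h3
  exact h3

lemma grad_ineq (f : E → ℝ) (f' : E → E) (hf : ConvexOn ℝ Set.univ f)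
    (hf' : ∀ p, HasGradientAt f (f' p) p) (a b : E) :
    f a + ⟪f' a, b - a⟫ ≤ f b := by
  have hφ : ConvexOn ℝ Set.univ (fun s : ℝ => f (a + s • (b - a))) := by
    have := hf.comp_affineMap (AffineMap.lineMap a b : ℝ →ᵃ[ℝ] E)
    simpa [Function.comp_def, AffineMap.lineMap_apply, add_comm] using this
  have hd := line_hasDerivAt f f' hf' a (b - a) 0
  simp only [zero_smul, add_zero] at hd
  have := hφ.le_slope_of_hasDerivAt (Set.mem_univ (0:ℝ)) (Set.mem_univ (1:ℝ)) one_pos hd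
  simp only [slope_def_field, one_smul, zero_smul, add_zero, add_sub_cancel, sub_zero,
    div_one] at this
  linarith [this]

lemma descent_lemma (f : E → ℝ) (f' : E → E) (hf' : ∀ p, HasGradientAt f (f' p) p)
    (Lf : ℝ) (hlip : ∀ p q, ‖f' p - f' q‖ ≤ Lf * ‖p - q‖) (a b : E) :
    f b ≤ f a + ⟪f' a, b - a⟫ + Lf / 2 * ‖b - a‖ ^ 2 := by
  set d := b - a with hd
  set ψ : ℝ → ℝ := fun s =>
    f a + s * ⟪f' a, d⟫ + s ^ 2 * (Lf / 2) * ‖d‖ ^ 2 - f (a + s • d) with hψ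
  have hψd : ∀ s : ℝ, HasDerivAt ψ
      (⟪f' a, d⟫ + s * Lf * ‖d‖ ^ 2 - ⟪f' (a + s • d), d⟫) s := by
    intro s
    have p1 : HasDerivAt (fun r : ℝ => f a + r * ⟪f' a, d⟫ + r ^ 2 * (Lf / 2) * ‖d‖ ^ 2)
        (⟪f' a, d⟫ + s * Lf * ‖d‖ ^ 2) s := by
      have q1 : HasDerivAt (fun r : ℝ => f a + r * ⟪f' a, d⟫) (⟪f' a, d⟫) s := by
        simpa using ((hasDerivAt_id s).mul_const (⟪f' a, d⟫)).const_add (f a)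
      have q2 : HasDerivAt (fun r : ℝ => r ^ 2 * (Lf / 2) * ‖d‖ ^ 2)
          (2 * s * (Lf / 2) * ‖d‖ ^ 2) s := by
        have := (hasDerivAt_pow 2 s).mul_const (Lf / 2)
        have := this.mul_const (‖d‖ ^ 2)
        exact this.congr_deriv (by ring)
      have := q1.add q2
      exact this.congr_deriv (by ring)
    have := p1.sub (line_hasDerivAt f f' hf' a d s)
    exact this
  have hdiff : Differentiable ℝ ψ := fun s => (hψd s).differentiableAt
  have hmono : MonotoneOn ψ (Set.Icc (0:ℝ) 1) := by
    apply monotoneOn_of_deriv_nonneg (convex_Icc 0 1) hdiff.continuous.continuousOn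
      hdiff.differentiableOn
    intro s hs
    rw [interior_Icc] at hs
    rw [(hψd s).deriv]
    have h1 : ⟪f' (a + s • d) - f' a, d⟫ ≤ ‖f' (a + s • d) - f' a‖ * ‖d‖ :=
      real_inner_le_norm _ _
    have h2 : ‖f' (a + s • d) - f' a‖ ≤ Lf * (s * ‖d‖) := by
      have := hlip (a + s • d) a
      simpa [norm_smul, abs_of_pos hs.1] using this
    have h3 : ‖f' (a + s • d) - f' a‖ * ‖d‖ ≤ Lf * (s * ‖d‖) * ‖d‖ :=
      mul_le_mul_of_nonneg_right h2 (norm_nonneg _)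
    have h4 : ⟪f' (a + s • d), d⟫ - ⟪f' a, d⟫ = ⟪f' (a + s • d) - f' a, d⟫ := by
      rw [inner_sub_left]
    nlinarith [h1, h3, h4]
  have h01 := hmono (Set.mem_Icc.2 ⟨le_refl 0, zero_le_one⟩)
    (Set.mem_Icc.2 ⟨zero_le_one, le_refl 1⟩) zero_le_one
  have hab : a + (1:ℝ) • d = b := by rw [hd]; simp
  have h0 : ψ 0 = 0 := by simp [hψ]
  have h1 : ψ 1 = f a + ⟪f' a, d⟫ + Lf / 2 * ‖d‖ ^ 2 - f b := by
    rw [hψ]; simp only [one_pow, one_mul, hab]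
  rw [h0, h1] at h01
  linarith

lemma comb_norm_sq (θ : ℝ) (m w c : E) :
    ‖((1 - θ) • m + θ • w) - c‖ ^ 2
      = (1 - θ) * ‖m - c‖ ^ 2 + θ * ‖w - c‖ ^ 2 - θ * (1 - θ) * ‖w - m‖ ^ 2 := by
  have h : ((1 - θ) • m + θ • w) - c = (1 - θ) • (m - c) + θ • (w - c) := by
    simp [smul_sub, sub_smul]; abel
  have h2 : w - m = (w - c) - (m - c) := by abel
  rw [h, h2, norm_add_sq_real, norm_smul, norm_smul, real_inner_smul_left,
    real_inner_smul_right, norm_sub_sq_real (w - c) (m - c), real_inner_comm (w - c) (m - c)]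
  simp only [Real.norm_eq_abs, mul_pow, sq_abs]
  ring

lemma strong_min (φ : E → ℝ) (hφ : ConvexOn ℝ Set.univ φ) (μ : ℝ) (hμ : 0 < μ)
    (c m : E) (hmin : ∀ w, φ m + ‖m - c‖ ^ 2 / (2 * μ) ≤ φ w + ‖w - c‖ ^ 2 / (2 * μ)) :
    ∀ w, φ m + ‖m - c‖ ^ 2 / (2 * μ) + ‖w - m‖ ^ 2 / (2 * μ)
      ≤ φ w + ‖w - c‖ ^ 2 / (2 * μ) := by
  intro w
  obtain ⟨q, hq⟩ : ∃ q, q = ‖w - m‖ ^ 2 / (2 * μ) := ⟨_, rfl⟩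
  obtain ⟨D, hD⟩ : ∃ D, D = (φ w + ‖w - c‖ ^ 2 / (2 * μ)) - (φ m + ‖m - c‖ ^ 2 / (2 * μ)) :=
    ⟨_, rfl⟩
  have h2μ : (0:ℝ) < 2 * μ := by linarith
  have hD0 : 0 ≤ D := by have := hmin w; rw [hD]; linarith
  have hq0 : 0 ≤ q := by rw [hq]; positivity
  have key : ∀ θ : ℝ, 0 < θ → θ < 1 → θ * ((1 - θ) * q) ≤ θ * D := by
    intro θ h0 h1
    have hc := hφ.2 (Set.mem_univ m) (Set.mem_univ w)
      (by linarith : (0:ℝ) ≤ 1 - θ) (le_of_lt h0) (by ring)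
    have hmm := hmin ((1 - θ) • m + θ • w)
    rw [comb_norm_sq θ m w c] at hmm
    simp only [smul_eq_mul] at hc
    rw [hq, hD]
    rw [hq, hD] at *
    have expand : ((1 - θ) * ‖m - c‖ ^ 2 + θ * ‖w - c‖ ^ 2
        - θ * (1 - θ) * ‖w - m‖ ^ 2) / (2 * μ)
        = (1 - θ) * (‖m - c‖ ^ 2 / (2 * μ)) + θ * (‖w - c‖ ^ 2 / (2 * μ))
          - θ * (1 - θ) * (‖w - m‖ ^ 2 / (2 * μ)) := by ring
    rw [expand] at hmm
    nlinarith [hmm, hc]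
  by_contra hlt
  push_neg at hlt
  have hqD : D < q := by rw [hq, hD]; linarith
  have hqpos : 0 < q := lt_of_le_of_lt hD0 hqD
  obtain ⟨θ, hθ⟩ : ∃ θ, θ = (q - D) / (2 * q) := ⟨_, rfl⟩
  have hθ0 : 0 < θ := by rw [hθ]; apply div_pos; linarith; linarith
  have hθ1 : θ < 1 := by rw [hθ, div_lt_one (by linarith : (0:ℝ) < 2 * q)]; linarith
  have hk := key θ hθ0 hθ1
  have hθq : θ * q = (q - D) / 2 := by rw [hθ]; field_simp
  have h5 : (1 - θ) * q ≤ D := (mul_le_mul_iff_right₀ hθ0).1 hk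
  have h6 : (1 - θ) * q = q - θ * q := by ring
  linarith [h5, hθq, hqD]

lemma affine_convexOn (c p : E) (r : ℝ) :
    ConvexOn ℝ Set.univ (fun u => r + ⟪c, u - p⟫) := by
  refine ⟨convex_univ, fun u _ w _ α β hα hβ hs => le_of_eq ?_⟩
  simp only [smul_eq_mul, inner_sub_right, inner_add_right, real_inner_smul_right]
  linear_combination (⟪c, p⟫ - r) * hs

lemma vec_id (T : ℝ) (a b Y X : E) :
    T * (T - 1) * (‖Y - a‖ ^ 2 - ‖Y - b‖ ^ 2) + T * (‖X - a‖ ^ 2 - ‖X - b‖ ^ 2)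
      = ‖T • a - (T - 1) • Y - X‖ ^ 2 - ‖T • b - (T - 1) • Y - X‖ ^ 2 := by
  simp only [← real_inner_self_eq_norm_sq, inner_sub_left, inner_sub_right,
    real_inner_smul_left, real_inner_smul_right]
  simp only [real_inner_comm a Y, real_inner_comm b Y, real_inner_comm a X,
    real_inner_comm b X, real_inner_comm Y X]
  ring
end aux

set_option maxHeartbeats 2000000 in
/-- The Lyapunov recursion for FALM-S: `2μ t_k² v_k + ‖uᵏ‖²` is non-increasing.
`skip k = true` marks a skipping step (`xᵏ = zᵏ`), `skip k = false` a regular step. -/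
theorem falms_lyapunov {n : ℕ}
    (f g : EuclideanSpace ℝ (Fin n) → ℝ)
    (f' : EuclideanSpace ℝ (Fin n) → EuclideanSpace ℝ (Fin n))
    (hf : ConvexOn ℝ Set.univ f) (hg : ConvexOn ℝ Set.univ g)
    (hf' : ∀ x, HasGradientAt f (f' x) x)
    (Lf μ : ℝ) (hLf : 0 < Lf)
    (hlip : ∀ a b, ‖f' a - f' b‖ ≤ Lf * ‖a - b‖)
    (hμ0 : 0 < μ) (hμ : μ ≤ 1 / Lf)
    (Lmu : EuclideanSpace ℝ (Fin n) → EuclideanSpace ℝ (Fin n) → EuclideanSpace ℝ (Fin n) → ℝ)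
    (hLmu : ∀ x y lam, Lmu x y lam =
      f x + g y - ⟪lam, x - y⟫ + ‖x - y‖ ^ 2 / (2 * μ))
    (Qf : EuclideanSpace ℝ (Fin n) → EuclideanSpace ℝ (Fin n) → ℝ)
    (hQf : ∀ u v, Qf u v = g u + f v + ⟪f' v, u - v⟫ + ‖u - v‖ ^ 2 / (2 * μ))
    -- FALM-S iterates
    (x y z lam : ℕ → EuclideanSpace ℝ (Fin n)) (t : ℕ → ℝ) (skip : ℕ → Bool)
    (ht1 : t 1 = 1) (htpos : ∀ k : ℕ, 1 ≤ k → 1 ≤ t k)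
    (hz1 : z 1 = y 0)
    -- λᵏ ∈ −∂g(zᵏ)
    (hlam : ∀ k : ℕ, 1 ≤ k → ∀ u, g (z k) + ⟪-lam k, u - z k⟫ ≤ g u)
    -- regular step: xᵏ minimizes L_μ(·, zᵏ; λᵏ) and the skipping test fails
    (hreg : ∀ k : ℕ, 1 ≤ k → skip k = false →
      (∀ w, Lmu (x k) (z k) (lam k) ≤ Lmu w (z k) (lam k)) ∧
      f (x k) + g (x k) ≤ Lmu (x k) (z k) (lam k))
    -- skipping step: xᵏ = zᵏ
    (hskip : ∀ k : ℕ, 1 ≤ k → skip k = true → x k = z k)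
    -- yᵏ minimizes Q_f(·, xᵏ)
    (hy : ∀ k : ℕ, 1 ≤ k → ∀ w, Qf (y k) (x k) ≤ Qf w (x k))
    -- update rules for t, depending on the types of steps k and k+1
    (htsame : ∀ k : ℕ, 1 ≤ k → skip k = skip (k + 1) →
      (t k) ^ 2 = t (k + 1) * (t (k + 1) - 1))
    (htregskip : ∀ k : ℕ, 1 ≤ k → skip k = false → skip (k + 1) = true →
      2 * (t k) ^ 2 = t (k + 1) * (t (k + 1) - 1))
    (htskipreg : ∀ k : ℕ, 1 ≤ k → skip k = true → skip (k + 1) = false →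
      (t k) ^ 2 / 2 = t (k + 1) * (t (k + 1) - 1))
    -- extrapolation step
    (hz : ∀ k : ℕ, 1 ≤ k →
      z (k + 1) = y k + ((t k - 1) / t (k + 1)) • (y k - y (k - 1)))
    (xstar : EuclideanSpace ℝ (Fin n)) (hstar : ∀ w, f xstar + g xstar ≤ f w + g w)
    -- the Lyapunov quantities
    (u : ℕ → EuclideanSpace ℝ (Fin n)) (v : ℕ → ℝ)
    (hu : ∀ k : ℕ, 1 ≤ k → u k = t k • y k - (t k - 1) • y (k - 1) - xstar)
    (hv : ∀ k : ℕ, 1 ≤ k → v k =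
      if skip k then f (y k) + g (y k) - (f xstar + g xstar)
      else 2 * (f (y k) + g (y k) - (f xstar + g xstar))) :
    ∀ k : ℕ, 1 ≤ k →
      ‖u (k + 1)‖ ^ 2 - ‖u k‖ ^ 2 ≤
        2 * μ * ((t k) ^ 2 * v k - (t (k + 1)) ^ 2 * v (k + 1)) := by
  have h2μ : (0:ℝ) < 2 * μ := by linarith
  have hμLf : μ * Lf ≤ 1 := by rwa [le_div_iff₀ hLf] at hμ
  -- the key per-step inequality
  have key : ∀ j : ℕ, 1 ≤ j → ∀ w,
      (if skip j then (1:ℝ) else 2) * ((f (y j) + g (y j)) - (f w + g w))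
        ≤ (‖w - z j‖ ^ 2 - ‖w - y j‖ ^ 2) / (2 * μ) := by
    intro j hj w
    have hconvQ : ConvexOn ℝ Set.univ
        (fun u' => g u' + (f (x j) + ⟪f' (x j), u' - x j⟫)) :=
      hg.add (affine_convexOn (f' (x j)) (x j) (f (x j)))
    have hQeq : ∀ u', Qf u' (x j)
        = (g u' + (f (x j) + ⟪f' (x j), u' - x j⟫)) + ‖u' - x j‖ ^ 2 / (2 * μ) := by
      intro u'; rw [hQf]; ring
    have hA := strong_min _ hconvQ μ hμ0 (x j) (y j) (fun w' => by
      have := hy j hj w'; rw [hQeq (y j), hQeq w'] at this; linarith)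
    have QA : ∀ w', Qf (y j) (x j) + ‖w' - y j‖ ^ 2 / (2 * μ) ≤ Qf w' (x j) := by
      intro w'; have := hA w'; rw [hQeq (y j), hQeq w']; linarith
    have hB : f (y j) + g (y j) ≤ Qf (y j) (x j) := by
      rw [hQf]
      have hd := descent_lemma f f' hf' Lf hlip (x j) (y j)
      have hs : (0:ℝ) ≤ ‖y j - x j‖ ^ 2 := sq_nonneg _
      have hsq : Lf / 2 * ‖y j - x j‖ ^ 2 ≤ ‖y j - x j‖ ^ 2 / (2 * μ) := by
        rw [div_mul_eq_mul_div, div_le_div_iff₀ two_pos h2μ]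
        nlinarith [hs, hμLf, hμ0]
      linarith [hd, hsq]
    have hC : ∀ w', Qf w' (x j) ≤ f w' + g w' + ‖w' - x j‖ ^ 2 / (2 * μ) := by
      intro w'; rw [hQf]
      have := grad_ineq f f' hf hf' (x j) w'
      linarith
    cases hsk : skip j with
    | true =>
      have hxz := hskip j hj hsk
      simp only [hsk, if_true, one_mul]
      rw [← hxz, sub_div]
      linarith [QA w, hB, hC w]
    | false =>
      obtain ⟨hmin2, htest⟩ := hreg j hj hsk
      have hconvL : ConvexOn ℝ Set.univ
          (fun u' => f u' + (g (z j) + ⟪-lam j, u' - z j⟫)) :=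
        hf.add (affine_convexOn (-lam j) (z j) (g (z j)))
      have hLeq : ∀ u', Lmu u' (z j) (lam j)
          = (f u' + (g (z j) + ⟪-lam j, u' - z j⟫)) + ‖u' - z j‖ ^ 2 / (2 * μ) := by
        intro u'; rw [hLmu, inner_neg_left]; ring
      have hA2 := strong_min _ hconvL μ hμ0 (z j) (x j) (fun w' => by
        have := hmin2 w'; rw [hLeq (x j), hLeq w'] at this; linarith)
      have QA2 : ∀ w', Lmu (x j) (z j) (lam j) + ‖w' - x j‖ ^ 2 / (2 * μ)
          ≤ Lmu w' (z j) (lam j) := by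
        intro w'; have := hA2 w'; rw [hLeq (x j), hLeq w']; linarith
      have hC2 : ∀ w', Lmu w' (z j) (lam j) ≤ f w' + g w' + ‖w' - z j‖ ^ 2 / (2 * μ) := by
        intro w'; rw [hLmu]
        have := hlam j hj w'
        rw [inner_neg_left] at this
        linarith
      have hFyx : f (y j) + g (y j) ≤ f (x j) + g (x j) := by
        have hQ1 := QA (x j)
        have hQxx : Qf (x j) (x j) = f (x j) + g (x j) := by
          rw [hQf]
          simp only [sub_self, inner_zero_right, norm_zero, ne_eq, OfNat.ofNat_ne_zero,
            not_false_eq_true, zero_pow, zero_div, add_zero]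
          ring
        have hnn : (0:ℝ) ≤ ‖x j - y j‖ ^ 2 / (2 * μ) := by positivity
        rw [hQxx] at hQ1
        linarith [hB]
      simp only [hsk, Bool.false_eq_true, if_false]
      rw [sub_div]
      linarith [QA w, hB, hC w, QA2 w, hC2 w, htest, hFyx]
  -- assembly
  intro k hk
  have hk1 : (1:ℕ) ≤ k + 1 := by omega
  have hT : 1 ≤ t (k + 1) := htpos (k + 1) hk1
  have hTne : t (k + 1) ≠ 0 := by intro h; rw [h] at hT; linarith
  have hu1 : u (k + 1) = t (k + 1) • y (k + 1) - (t (k + 1) - 1) • y k - xstar := by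
    have := hu (k + 1) hk1; simpa using this
  have hu0 : u k = t (k + 1) • z (k + 1) - (t (k + 1) - 1) • y k - xstar := by
    rw [hu k hk, hz k hk]
    have hc : t (k + 1) • (((t k - 1) / t (k + 1)) • (y k - y (k - 1)))
        = (t k - 1) • (y k - y (k - 1)) := by
      rw [smul_smul]; congr 1; field_simp
    rw [smul_add, hc, smul_sub]
    module
  have hvec := vec_id (t (k + 1)) (z (k + 1)) (y (k + 1)) (y k) xstar
  rw [← hu0, ← hu1] at hvec
  have K1 := key (k + 1) hk1 (y k)
  have K2 := key (k + 1) hk1 xstar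
  rw [le_div_iff₀ h2μ] at K1 K2
  have e1 := mul_le_mul_of_nonneg_left K1
    (show (0:ℝ) ≤ t (k + 1) * (t (k + 1) - 1) by nlinarith)
  have e2 := mul_le_mul_of_nonneg_left K2 (show (0:ℝ) ≤ t (k + 1) by linarith)
  rw [hv k hk, hv (k + 1) hk1]
  cases hsk : skip k <;> cases hsk1 : skip (k + 1) <;>
    simp only [hsk, hsk1, Bool.false_eq_true, if_true, if_false] at e1 e2 ⊢
  · -- false, false
    have hrel := htsame k hk (by rw [hsk, hsk1])
    rw [hrel]
    nlinarith [e1, e2, hvec]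
  · -- false, true
    have hrel := htregskip k hk hsk hsk1
    have h : t k ^ 2 = t (k + 1) * (t (k + 1) - 1) / 2 := by linarith
    rw [h]
    nlinarith [e1, e2, hvec]
  · -- true, false
    have hrel := htskipreg k hk hsk hsk1
    have h : t k ^ 2 = 2 * (t (k + 1) * (t (k + 1) - 1)) := by linarith
    rw [h]
    nlinarith [e1, e2, hvec]
  · -- true, true
    have hrel := htsame k hk (by rw [hsk, hsk1])
    rw [hrel]
    nlinarith [e1, e2, hvec]
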